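/- Every class of representations axiomatizable by action-type formulas is right-local: if (V, G) is a representation such that (V, H) belongs to the class for every finitely generated subgroup H ≤ G, then (V, G) belongs to the class. -/

import Mathlib

/-- Action-type first-order formulas over the free representation
`W = (X·K[F(Y)], F(Y))`: atoms are action equalities `w ≡ 0` with
`w` in the free `K[F(Y)]`-module on `X`, and the only quantifiers are
`∃x` over module variables `x ∈ X`. -/
inductive AFormula (K X Y : Type) [CommRing K] : Type
  | eq : (X →₀ MonoidAlgebra K (FreeGroup Y)) → AFormula K X Y
  | or : AFormula K X Y → AFormula K X Y → AFormula K X Y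
  | and : AFormula K X Y → AFormula K X Y → AFormula K X Y
  | not : AFormula K X Y → AFormula K X Y
  | ex : X → AFormula K X Y → AFormula K X Y

variable {K X Y G V : Type} [CommRing K] [Group G] [AddCommGroup V] [Module K V]

/-- Value of an element `w = Σ xᵢ·uᵢ` of the free `K[F(Y)]`-module under an
assignment `α : X → V` of module variables and `β : Y → G` of group variables,
in the representation `ρ`. -/
noncomputable def evalW (ρ : Representation K G V) (α : X → V) (β : Y → G)
    (w : X →₀ MonoidAlgebra K (FreeGroup Y)) : V :=
  w.sum fun x u => Representation.asAlgebraHom (ρ.comp (FreeGroup.lift β)) u (α x)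

/-- Satisfaction of an action-type formula in a representation `ρ` under a
valuation `(α, β)`. -/
def SatA [DecidableEq X] (ρ : Representation K G V) (α : X → V) (β : Y → G) :
    AFormula K X Y → Prop
  | .eq w => evalW ρ α β w = 0
  | .or u v => SatA ρ α β u ∨ SatA ρ α β v
  | .and u v => SatA ρ α β u ∧ SatA ρ α β v
  | .not u => ¬ SatA ρ α β u
  | .ex x u => ∃ a : V, SatA ρ (Function.update α x a) β u

/-- An action-type formula holds in a representation if it is satisfied by
every valuation. -/
def HoldsA [DecidableEq X] (ρ : Representation K G V) (u : AFormula K X Y) : Prop :=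
  ∀ (α : X → V) (β : Y → G), SatA ρ α β u

/-- The kernel of the action of `G` on `V`. -/
noncomputable def actionKer (ρ : Representation K G V) : Subgroup G :=
  ρ.asGroupHom.ker

instance (ρ : Representation K G V) : (actionKer ρ).Normal :=
  MonoidHom.normal_ker _

/-- The faithful representation `(V, G/N)` associated to `(V, G)`, where `N` is
the kernel of the action. -/
noncomputable def faithfulQuot (ρ : Representation K G V) :
    Representation K (G ⧸ actionKer ρ) V :=
  (Units.coeHom (V →ₗ[K] V)).comp (QuotientGroup.kerLift ρ.asGroupHom)

/-- satisfaction depends only on the composed representation of the free group -/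
lemma satA_of_comp_eq [DecidableEq X] {G' : Type} [Group G']
    {ρ₁ : Representation K G V} {ρ₂ : Representation K G' V}
    {β₁ : Y → G} {β₂ : Y → G'}
    (h : ρ₁.comp (FreeGroup.lift β₁) = ρ₂.comp (FreeGroup.lift β₂)) :
    ∀ (u : AFormula K X Y) (α : X → V), SatA ρ₁ α β₁ u ↔ SatA ρ₂ α β₂ u := by
  intro u
  induction u with
  | eq w => intro α; simp only [SatA, evalW, h]
  | or u v hu hv => intro α; simp only [SatA, hu, hv]
  | and u v hu hv => intro α; simp only [SatA, hu, hv]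
  | not u hu => intro α; simp only [SatA, hu]
  | ex x u hu => intro α; simp only [SatA]; exact exists_congr fun a => hu _

noncomputable def varsF [DecidableEq Y] (g : FreeGroup Y) : Finset Y :=
  (g.toWord.map Prod.fst).toFinset

lemma lift_eq_of_agree [DecidableEq Y] {β β' : Y → G} (g : FreeGroup Y)
    (hβ : ∀ y ∈ varsF g, β y = β' y) :
    FreeGroup.lift β g = FreeGroup.lift β' g := by
  conv_lhs => rw [← FreeGroup.mk_toWord (x := g)]
  conv_rhs => rw [← FreeGroup.mk_toWord (x := g)]
  rw [FreeGroup.lift_mk, FreeGroup.lift_mk]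
  congr 1
  refine List.map_congr_left fun p hp => ?_
  have hy : p.1 ∈ varsF g := by
    simp only [varsF, List.mem_toFinset, List.mem_map]
    exact ⟨p, hp, rfl⟩
  rw [hβ p.1 hy]

noncomputable def varsU [DecidableEq Y] (u : MonoidAlgebra K (FreeGroup Y)) : Finset Y :=
  u.coeff.support.sup varsF

lemma asAlgebraHom_congr {σ σ' : Representation K (FreeGroup Y) V}
    (u : MonoidAlgebra K (FreeGroup Y)) (h : ∀ g ∈ u.coeff.support, σ g = σ' g) :
    σ.asAlgebraHom u = σ'.asAlgebraHom u := by
  rw [Representation.asAlgebraHom_def, Representation.asAlgebraHom_def,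
    MonoidAlgebra.lift_apply, MonoidAlgebra.lift_apply]
  exact Finsupp.sum_congr fun g hg => by rw [h g hg]

noncomputable def varsW [DecidableEq Y] (w : X →₀ MonoidAlgebra K (FreeGroup Y)) : Finset Y :=
  w.support.sup fun x => varsU (w x)

lemma evalW_congr [DecidableEq Y] {ρ : Representation K G V} {α : X → V} {β β' : Y → G}
    (w : X →₀ MonoidAlgebra K (FreeGroup Y)) (h : ∀ y ∈ varsW w, β y = β' y) :
    evalW ρ α β w = evalW ρ α β' w := by
  refine Finsupp.sum_congr fun x hx => ?_
  have : Representation.asAlgebraHom (ρ.comp (FreeGroup.lift β)) (w x)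
      = Representation.asAlgebraHom (ρ.comp (FreeGroup.lift β')) (w x) := by
    refine asAlgebraHom_congr _ fun g hg => ?_
    have hlift : FreeGroup.lift β g = FreeGroup.lift β' g := by
      refine lift_eq_of_agree g fun y hy => h y ?_
      have h1 : varsF g ≤ varsU (w x) := by unfold varsU; exact Finset.le_sup hg
      have h2 : varsU (w x) ≤ varsW w := by unfold varsW; exact Finset.le_sup (f := fun x => varsU (w x)) hx
      exact h2 (h1 hy)
    show ρ (FreeGroup.lift β g) = ρ (FreeGroup.lift β' g)
    rw [hlift]
  rw [this]

noncomputable def varsA [DecidableEq Y] : AFormula K X Y → Finset Y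
  | .eq w => varsW w
  | .or u v => varsA u ∪ varsA v
  | .and u v => varsA u ∪ varsA v
  | .not u => varsA u
  | .ex _ u => varsA u

lemma satA_congr_beta [DecidableEq X] [DecidableEq Y] {ρ : Representation K G V}
    {β β' : Y → G} (u : AFormula K X Y) (h : ∀ y ∈ varsA u, β y = β' y) :
    ∀ α : X → V, SatA ρ α β u ↔ SatA ρ α β' u := by
  induction u with
  | eq w => intro α; simp only [SatA]; rw [evalW_congr w h]
  | or u v hu hv =>
      intro α
      simp only [SatA]
      rw [hu (fun y hy => h y (Finset.mem_union_left _ hy)) α,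
        hv (fun y hy => h y (Finset.mem_union_right _ hy)) α]
  | and u v hu hv =>
      intro α
      simp only [SatA]
      rw [hu (fun y hy => h y (Finset.mem_union_left _ hy)) α,
        hv (fun y hy => h y (Finset.mem_union_right _ hy)) α]
  | not u hu => intro α; simp only [SatA]; rw [hu h α]
  | ex x u hu => intro α; simp only [SatA]; exact exists_congr fun a => hu h _

/-- Every class of representations axiomatizable by action-type formulas is
right-local: if `(V, H)` satisfies the axioms `T` for every finitely generated
subgroup `H ≤ G`, then `(V, G)` satisfies `T`. -/
theorem actionType_axiomatizable_rightLocal [DecidableEq X] [DecidableEq Y]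
    (T : Set (AFormula K X Y)) (ρ : Representation K G V)
    (h : ∀ H : Subgroup G, H.FG → ∀ u ∈ T, HoldsA (ρ.comp H.subtype) u) :
    ∀ u ∈ T, HoldsA ρ u := by
  intro u hu α β
  classical
  set S : Finset Y := varsA u with hS
  set βS : Y → G := fun y => if y ∈ S then β y else 1 with hβS
  set F : Finset G := insert 1 (S.image β) with hF
  set H : Subgroup G := Subgroup.closure (F : Set G) with hH
  have hFG : H.FG := ⟨F, rfl⟩
  have hmem : ∀ y, βS y ∈ H := by
    intro y
    refine Subgroup.subset_closure ?_
    by_cases hy : y ∈ S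
    · simp only [hβS, hy, if_pos, hF, Finset.coe_insert, Set.mem_insert_iff]
      exact Or.inr (Finset.mem_coe.2 (Finset.mem_image_of_mem β hy))
    · have h1 : βS y = 1 := if_neg hy
      rw [h1, hF]
      simp
  set β' : Y → H := fun y => ⟨βS y, hmem y⟩ with hβ'
  have hlift : H.subtype.comp (FreeGroup.lift β') = FreeGroup.lift βS :=
    FreeGroup.ext_hom _ _ fun y => by simp [hβ']
  have hcomp : (ρ.comp H.subtype).comp (FreeGroup.lift β') = ρ.comp (FreeGroup.lift βS) := by
    show ρ.comp (H.subtype.comp (FreeGroup.lift β')) = _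
    rw [hlift]
  have h1 : SatA (ρ.comp H.subtype) α β' u := h H hFG u hu α β'
  have h2 : SatA ρ α βS u := (satA_of_comp_eq hcomp u α).1 h1
  refine (satA_congr_beta u (β := β) (β' := βS) ?_ α).2 h2
  intro y hy
  simp only [hβS, hS]
  rw [if_pos hy]
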